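/- Define H(u) = 2 Σ_{n≥1} (2n²u² − 1) e^{−n²u²} for u > 0. Then for all λ, z > 0, (1/(2√π)) ∫₀^∞ e^{−λr} r^{−3/2} H( z/√r ) dr = √λ coth(z√λ) − √λ. -/

import Mathlib

open MeasureTheory Set Real Filter

variable {b c : ℝ}

noncomputable def Eaux (b c r : ℝ) : ℝ := Real.exp (-(b*r + c/r))

lemma Eaux_pos (b c r : ℝ) : 0 < Eaux b c r := Real.exp_pos _

lemma cube_le_exp {x : ℝ} (hx : 0 ≤ x) : x^3 ≤ 27 * Real.exp x := by
  have h1 : x/3 ≤ Real.exp (x/3) := by linarith [Real.add_one_le_exp (x/3)]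
  have h2 : (x/3)^3 ≤ (Real.exp (x/3))^3 :=
    pow_le_pow_left₀ (by positivity) h1 3
  have h3 : (Real.exp (x/3))^3 = Real.exp x := by
    rw [← Real.exp_nat_mul]; congr 1; push_cast; ring
  nlinarith [h2, h3]

lemma exp_neg_div_le {c r : ℝ} (hc : 0 < c) (hr : 0 < r) :
    Real.exp (-(c/r)) ≤ 27 * r^3 / c^3 := by
  have h := cube_le_exp (le_of_lt (div_pos hc hr))
  have hcr : (c/r)^3 * r^3 = c^3 := by field_simp
  rw [Real.exp_neg, inv_le_iff_one_le_mul₀ (Real.exp_pos _), div_mul_eq_mul_div,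
    le_div_iff₀ (by positivity : (0:ℝ) < c^3)]
  nlinarith [h, pow_pos hr 3, Real.exp_pos (c/r)]

lemma Eaux_le {b c r : ℝ} (hc : 0 < c) (hr : 0 < r) :
    Eaux b c r ≤ 27 * r^3 / c^3 * Real.exp (-(b*r)) := by
  have : Eaux b c r = Real.exp (-(c/r)) * Real.exp (-(b*r)) := by
    rw [Eaux, ← Real.exp_add]; ring_nf
  rw [this]
  exact mul_le_mul_of_nonneg_right (exp_neg_div_le hc hr) (le_of_lt (Real.exp_pos _))

lemma integrableOn_rpow_Eaux {b c : ℝ} (hb : 0 < b) (hc : 0 < c) {s : ℝ} (hs : -4 < s) :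
    IntegrableOn (fun r => r ^ s * Eaux b c r) (Ioi (0:ℝ)) := by
  have hbase : IntegrableOn (fun r : ℝ => r ^ (s+3) * Real.exp (-b * r)) (Ioi (0:ℝ)) := by
    have := integrableOn_rpow_mul_exp_neg_mul_rpow (p := 1) (s := s+3) (b := b)
      (by linarith) one_pos hb
    simpa [Real.rpow_one] using this
  have hmeas : AEStronglyMeasurable (fun r : ℝ => r ^ s * Eaux b c r)
      (volume.restrict (Ioi (0:ℝ))) := by
    apply ContinuousOn.aestronglyMeasurable _ measurableSet_Ioi
    apply ContinuousOn.mul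
    · exact fun x hx => (Real.continuousAt_rpow_const x s (Or.inl (ne_of_gt hx))).continuousWithinAt
    · apply Continuous.comp_continuousOn Real.continuous_exp
      apply ContinuousOn.neg
      exact (continuousOn_const.mul continuousOn_id).add
        (continuousOn_const.div continuousOn_id (fun x hx => ne_of_gt hx))
  refine Integrable.mono' (hbase.const_mul (27 / c^3)) hmeas ?_
  filter_upwards [ae_restrict_mem measurableSet_Ioi] with r hr
  have hr0 : (0:ℝ) < r := hr
  rw [Real.norm_eq_abs, abs_of_nonneg (mul_nonneg (Real.rpow_nonneg hr0.le s) (Eaux_pos _ _ _).le)]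
  calc r ^ s * Eaux b c r ≤ r ^ s * (27 * r^3 / c^3 * Real.exp (-(b*r))) :=
        mul_le_mul_of_nonneg_left (Eaux_le hc hr0) (by positivity)
    _ = 27 / c^3 * (r ^ (s+3) * Real.exp (-b * r)) := by
        rw [Real.rpow_add hr0]
        rw [show ((3:ℝ)) = ((3:ℕ):ℝ) by norm_num, Real.rpow_natCast]
        ring_nf

lemma lemK (hb : 0 < b) (hc : 0 < c) :
    ∫ r in Ioi (0:ℝ),
      (Real.sqrt b * r ^ (-(1:ℝ)/2) + Real.sqrt c * r ^ (-(3:ℝ)/2)) * Eaux b c r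
      = 2 * Real.sqrt π * Real.exp (-2 * Real.sqrt (b*c)) := by
  set sb := Real.sqrt b with hsbdef
  set sc := Real.sqrt c with hscdef
  have hsb : 0 < sb := Real.sqrt_pos.mpr hb
  have hsc : 0 < sc := Real.sqrt_pos.mpr hc
  have hsb2 : sb^2 = b := Real.sq_sqrt hb.le
  have hsc2 : sc^2 = c := Real.sq_sqrt hc.le
  have hbc : sb * sc = Real.sqrt (b*c) := (Real.sqrt_mul hb.le c).symm
  set f : ℝ → ℝ := fun r => sb * r ^ ((1:ℝ)/2) - sc * r ^ (-(1:ℝ)/2) with hfdef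
  set f' : ℝ → ℝ := fun r => (sb * r ^ (-(1:ℝ)/2) + sc * r ^ (-(3:ℝ)/2))/2 with hf'def
  have hd : ∀ r ∈ Ioi (0:ℝ), HasDerivAt f (f' r) r := by
    intro r hr
    have h1 : HasDerivAt (fun x : ℝ => x ^ ((1:ℝ)/2)) (((1:ℝ)/2) * r ^ ((1:ℝ)/2 - 1)) r :=
      Real.hasDerivAt_rpow_const (Or.inl (ne_of_gt hr))
    have h2 : HasDerivAt (fun x : ℝ => x ^ (-(1:ℝ)/2)) ((-(1:ℝ)/2) * r ^ (-(1:ℝ)/2 - 1)) r :=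
      Real.hasDerivAt_rpow_const (Or.inl (ne_of_gt hr))
    have h := (h1.const_mul sb).sub (h2.const_mul sc)
    refine h.congr_deriv ?_
    rw [show (1:ℝ)/2 - 1 = -(1:ℝ)/2 by norm_num, show (-(1:ℝ)/2 - 1) = -(3:ℝ)/2 by norm_num]
    ring
  have hf'pos : ∀ r ∈ Ioi (0:ℝ), 0 < f' r := by
    intro r hr
    have hr0 : (0:ℝ) < r := hr
    have := Real.rpow_pos_of_pos hr0 (-(1:ℝ)/2)
    have := Real.rpow_pos_of_pos hr0 (-(3:ℝ)/2)
    positivity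
  have hmono : StrictMonoOn f (Ioi (0:ℝ)) := by
    apply strictMonoOn_of_deriv_pos (convex_Ioi 0)
    · exact fun x hx => (hd x hx).continuousAt.continuousWithinAt
    · intro x hx
      rw [interior_Ioi] at hx
      rw [(hd x hx).deriv]
      exact hf'pos x hx
  have hinj : InjOn f (Ioi (0:ℝ)) := hmono.injOn
  have hsurj : f '' Ioi (0:ℝ) = univ := by
    apply eq_univ_of_forall
    intro y
    set s := Real.sqrt (y^2 + 4*Real.sqrt (b*c)) with hsdef
    have hs2 : s^2 = y^2 + 4*Real.sqrt (b*c) := Real.sq_sqrt (by positivity)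
    have hys : -y < s := by
      have h1 : Real.sqrt (y^2) < s := by
        apply Real.sqrt_lt_sqrt (sq_nonneg y)
        have : (0:ℝ) < Real.sqrt (b*c) := Real.sqrt_pos.mpr (by positivity)
        linarith
      rw [Real.sqrt_sq_eq_abs] at h1
      linarith [neg_abs_le y]
    set x := (y + s)/(2*sb) with hxdef
    have hx : 0 < x := by
      apply div_pos _ (by positivity)
      linarith
    refine ⟨x^2, by simpa using pow_pos hx 2, ?_⟩
    have hr12 : ((x^2:ℝ)) ^ ((1:ℝ)/2) = x := by
      rw [← Real.rpow_natCast x 2, ← Real.rpow_mul hx.le]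
      norm_num
    have hrm12 : ((x^2:ℝ)) ^ (-(1:ℝ)/2) = x⁻¹ := by
      rw [show (-(1:ℝ)/2) = -((1:ℝ)/2) by norm_num, Real.rpow_neg (by positivity), hr12]
    have hkey : sb * x^2 - y * x - sc = 0 := by
      rw [hxdef]
      field_simp
      nlinarith [hs2, hbc, hsb2, hsc2]
    show f (x^2) = y
    rw [hfdef]
    simp only [hr12, hrm12]
    field_simp
    nlinarith [hkey]
  have himg := integral_image_eq_integral_abs_deriv_smul measurableSet_Ioi
    (fun r hr => (hd r hr).hasDerivWithinAt) hinj (fun t => Real.exp (-t^2))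
  rw [hsurj] at himg
  have hlhs : (∫ x in univ, Real.exp (-x^2)) = Real.sqrt π := by
    rw [Measure.restrict_univ]
    simpa using integral_gaussian 1
  rw [hlhs] at himg
  have hcong : ∀ r ∈ Ioi (0:ℝ), |f' r| • Real.exp (-(f r)^2)
      = (Real.exp (2*Real.sqrt (b*c))/2) *
        ((sb * r ^ (-(1:ℝ)/2) + sc * r ^ (-(3:ℝ)/2)) * Eaux b c r) := by
    intro r hr
    have hr0 : (0:ℝ) < r := hr
    have hsq : (f r)^2 = b*r + c/r - 2*Real.sqrt (b*c) := by
      rw [hfdef]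
      have e1 : (r ^ ((1:ℝ)/2))^2 = r := by
        rw [← Real.rpow_natCast (r ^ ((1:ℝ)/2)) 2, ← Real.rpow_mul hr0.le]
        norm_num
      have e2 : (r ^ (-(1:ℝ)/2))^2 = r⁻¹ := by
        rw [← Real.rpow_natCast (r ^ (-(1:ℝ)/2)) 2, ← Real.rpow_mul hr0.le]
        norm_num
        rw [Real.rpow_neg_one]
      have e3 : r ^ ((1:ℝ)/2) * r ^ (-(1:ℝ)/2) = 1 := by
        rw [← Real.rpow_add hr0]
        norm_num
      have expand : (sb * r ^ ((1:ℝ)/2) - sc * r ^ (-(1:ℝ)/2))^2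
          = sb^2 * (r ^ ((1:ℝ)/2))^2 + sc^2 * (r ^ (-(1:ℝ)/2))^2
            - 2*(sb*sc)*(r ^ ((1:ℝ)/2) * r ^ (-(1:ℝ)/2)) := by ring
      rw [expand, e1, e2, e3, hsb2, hsc2, hbc]
      rw [div_eq_mul_inv]
      ring
    rw [hsq, abs_of_pos (hf'pos r hr), hf'def, Eaux]
    rw [show -(b*r + c/r - 2*Real.sqrt (b*c)) = -(b*r+c/r) + 2*Real.sqrt (b*c) by ring,
      Real.exp_add]
    simp only [smul_eq_mul]
    ring
  rw [setIntegral_congr_fun measurableSet_Ioi hcong, MeasureTheory.integral_const_mul] at himg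
  have hep : (0:ℝ) < Real.exp (2*Real.sqrt (b*c)) := Real.exp_pos _
  rw [show (-2 : ℝ) * Real.sqrt (b*c) = -(2*Real.sqrt (b*c)) by ring, Real.exp_neg]
  field_simp at himg ⊢
  linarith [himg]
variable {b c : ℝ}

lemma lemSym (hb : 0 < b) (hc : 0 < c) :
    ∫ r in Ioi (0:ℝ), r ^ (-(1:ℝ)/2) * Eaux b c r
      = (Real.sqrt c / Real.sqrt b) * ∫ r in Ioi (0:ℝ), r ^ (-(3:ℝ)/2) * Eaux b c r := by
  set φ : ℝ → ℝ := fun r => c/b * r⁻¹ with hφdef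
  set φ' : ℝ → ℝ := fun r => c/b * (-(r^2)⁻¹) with hφ'def
  have hcb : (0:ℝ) < c/b := div_pos hc hb
  have hd : ∀ r ∈ Ioi (0:ℝ), HasDerivAt φ (φ' r) r := by
    intro r hr
    exact (hasDerivAt_inv (ne_of_gt hr)).const_mul (c/b)
  have hinj : InjOn φ (Ioi (0:ℝ)) := by
    intro r1 h1 r2 h2 he
    have h3 := mul_left_cancel₀ (ne_of_gt hcb) he
    exact inv_injective h3
  have himg : φ '' Ioi (0:ℝ) = Ioi (0:ℝ) := by
    ext y
    constructor
    · rintro ⟨r, hr, rfl⟩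
      have : (0:ℝ) < r := hr
      exact mul_pos hcb (inv_pos.mpr this)
    · intro hy
      have hy0 : (0:ℝ) < y := hy
      refine ⟨c/b * y⁻¹, mul_pos hcb (inv_pos.mpr hy0), ?_⟩
      show c/b * (c/b * y⁻¹)⁻¹ = y
      field_simp
  have key := integral_image_eq_integral_abs_deriv_smul measurableSet_Ioi
    (fun r hr => (hd r hr).hasDerivWithinAt) hinj
    (fun t => t ^ (-(1:ℝ)/2) * Eaux b c t)
  rw [himg] at key
  rw [key]
  have hcong : ∀ r ∈ Ioi (0:ℝ),
      |φ' r| • ((φ r) ^ (-(1:ℝ)/2) * Eaux b c (φ r))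
      = (c/b) ^ ((1:ℝ)/2) * (r ^ (-(3:ℝ)/2) * Eaux b c r) := by
    intro r hr
    have hr0 : (0:ℝ) < r := hr
    have habs : |φ' r| = (c/b) * (r^2)⁻¹ := by
      rw [hφ'def]
      rw [abs_of_neg (by simp; positivity)]
      ring
    have hE : Eaux b c (φ r) = Eaux b c r := by
      rw [hφdef, Eaux, Eaux]
      congr 1
      field_simp
      ring
    have hpow : (φ r) ^ (-(1:ℝ)/2) = (c/b) ^ (-(1:ℝ)/2) * r ^ ((1:ℝ)/2) := by
      rw [hφdef]
      show ((c/b) * r⁻¹) ^ (-(1:ℝ)/2) = _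
      rw [Real.mul_rpow hcb.le (inv_nonneg.mpr hr0.le)]
      congr 1
      rw [← Real.rpow_neg_one r, ← Real.rpow_mul hr0.le]
      norm_num
    rw [habs, hE, hpow]
    have h1 : (r^2)⁻¹ = r ^ (-(2:ℝ)) := by
      rw [← Real.rpow_natCast r 2, ← Real.rpow_neg hr0.le]
      norm_num
    have h2 : (c/b) * (c/b) ^ (-(1:ℝ)/2) = (c/b) ^ ((1:ℝ)/2) := by
      nth_rewrite 1 [← Real.rpow_one (c/b)]
      rw [← Real.rpow_add hcb]
      norm_num
    have h3 : r ^ (-(2:ℝ)) * r ^ ((1:ℝ)/2) = r ^ (-(3:ℝ)/2) := by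
      rw [← Real.rpow_add hr0]
      norm_num
    simp only [smul_eq_mul]
    calc (c/b) * (r^2)⁻¹ * ((c/b) ^ (-(1:ℝ)/2) * r ^ ((1:ℝ)/2) * Eaux b c r)
        = ((c/b) * (c/b) ^ (-(1:ℝ)/2)) * (((r^2)⁻¹ * r ^ ((1:ℝ)/2)) * Eaux b c r) := by ring
      _ = (c/b) ^ ((1:ℝ)/2) * (r ^ (-(3:ℝ)/2) * Eaux b c r) := by rw [h1, h2, h3]
  rw [setIntegral_congr_fun measurableSet_Ioi hcong, MeasureTheory.integral_const_mul]
  congr 1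
  rw [← Real.sqrt_eq_rpow, Real.sqrt_div hc.le]

lemma valJ (hb : 0 < b) (hc : 0 < c) :
    ∫ r in Ioi (0:ℝ), r ^ (-(3:ℝ)/2) * Eaux b c r
      = Real.sqrt π / Real.sqrt c * Real.exp (-2 * Real.sqrt (b*c)) := by
  have hsb : 0 < Real.sqrt b := Real.sqrt_pos.mpr hb
  have hsc : 0 < Real.sqrt c := Real.sqrt_pos.mpr hc
  have hI : IntegrableOn (fun r : ℝ => r ^ (-(1:ℝ)/2) * Eaux b c r) (Ioi (0:ℝ)) :=
    integrableOn_rpow_Eaux hb hc (by norm_num)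
  have hJ : IntegrableOn (fun r : ℝ => r ^ (-(3:ℝ)/2) * Eaux b c r) (Ioi (0:ℝ)) :=
    integrableOn_rpow_Eaux hb hc (by norm_num)
  have h0 : (fun r : ℝ => (Real.sqrt b * r ^ (-(1:ℝ)/2) + Real.sqrt c * r ^ (-(3:ℝ)/2))
        * Eaux b c r)
      = fun r : ℝ => Real.sqrt b * (r ^ (-(1:ℝ)/2) * Eaux b c r)
        + Real.sqrt c * (r ^ (-(3:ℝ)/2) * Eaux b c r) := funext fun r => by ring
  have hK := lemK hb hc
  rw [h0, integral_add (hI.const_mul _) (hJ.const_mul _),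
    MeasureTheory.integral_const_mul, MeasureTheory.integral_const_mul, lemSym hb hc] at hK
  have : (2 * Real.sqrt c) * ∫ r in Ioi (0:ℝ), r ^ (-(3:ℝ)/2) * Eaux b c r
      = 2 * Real.sqrt π * Real.exp (-2 * Real.sqrt (b*c)) := by
    rw [← hK]; field_simp; ring
  field_simp at this ⊢
  linarith

lemma valI (hb : 0 < b) (hc : 0 < c) :
    ∫ r in Ioi (0:ℝ), r ^ (-(1:ℝ)/2) * Eaux b c r
      = Real.sqrt π / Real.sqrt b * Real.exp (-2 * Real.sqrt (b*c)) := by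
  have hsb : 0 < Real.sqrt b := Real.sqrt_pos.mpr hb
  have hsc : 0 < Real.sqrt c := Real.sqrt_pos.mpr hc
  rw [lemSym hb hc, valJ hb hc]
  field_simp

lemma lemFTC (hb : 0 < b) (hc : 0 < c) :
    ∫ r in Ioi (0:ℝ),
      (2*c*r ^ (-(5:ℝ)/2) - r ^ (-(3:ℝ)/2) - 2*b*r ^ (-(1:ℝ)/2)) * Eaux b c r = 0 := by
  set G : ℝ → ℝ := fun r => 2 * r ^ (-(1:ℝ)/2) * Eaux b c r with hGdef
  set G' : ℝ → ℝ := fun r =>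
    (2*c*r ^ (-(5:ℝ)/2) - r ^ (-(3:ℝ)/2) - 2*b*r ^ (-(1:ℝ)/2)) * Eaux b c r with hG'def
  have hG0 : G 0 = 0 := by
    rw [hGdef]
    simp [Real.zero_rpow (by norm_num : (-(1:ℝ)/2) ≠ 0)]
  have hderiv : ∀ r ∈ Ioi (0:ℝ), HasDerivAt G (G' r) r := by
    intro r hr
    have hr0 : (0:ℝ) < r := hr
    have h1 : HasDerivAt (fun x : ℝ => x ^ (-(1:ℝ)/2)) ((-(1:ℝ)/2) * r ^ (-(1:ℝ)/2 - 1)) r :=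
      Real.hasDerivAt_rpow_const (Or.inl (ne_of_gt hr0))
    have h2inner : HasDerivAt (fun x : ℝ => -(b*x + c/x)) (-(b + c * (-(r^2)⁻¹))) r := by
      have ha : HasDerivAt (fun x : ℝ => b*x) b r := by
        simpa using (hasDerivAt_id r).const_mul b
      have hbi : HasDerivAt (fun x : ℝ => c/x) (c * (-(r^2)⁻¹)) r := by
        simpa [div_eq_mul_inv, mul_comm] using (hasDerivAt_inv (ne_of_gt hr0)).const_mul c
      exact (ha.add hbi).neg
    have h2 : HasDerivAt (fun x : ℝ => Eaux b c x)
        (Real.exp (-(b*r + c/r)) * (-(b + c * (-(r^2)⁻¹)))) r := by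
      simpa [Eaux] using h2inner.exp
    have h := ((h1.const_mul 2).mul h2)
    have e1 : (r^2)⁻¹ = r ^ (-(2:ℝ)) := by
      rw [← Real.rpow_natCast r 2, ← Real.rpow_neg hr0.le]; norm_num
    have e2 : r ^ (-(5:ℝ)/2) = r ^ (-(1:ℝ)/2) * (r^2)⁻¹ := by
      rw [e1, ← Real.rpow_add hr0]; norm_num
    have e3 : r ^ (-(1:ℝ)/2 - 1) = r ^ (-(3:ℝ)/2) := by norm_num
    have hval : 2 * ((-(1:ℝ)/2) * r ^ (-(1:ℝ)/2 - 1)) * Eaux b c r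
        + 2 * r ^ (-(1:ℝ)/2) * (Real.exp (-(b*r + c/r)) * (-(b + c * (-(r^2)⁻¹))))
        = G' r := by
      rw [hG'def]
      simp only [Eaux]
      rw [e3, e2]
      ring
    exact hval ▸ h
  have hcont : ContinuousWithinAt G (Ici (0:ℝ)) 0 := by
    rw [ContinuousWithinAt, hG0]
    apply squeeze_zero' (f := G) (g := fun r : ℝ => 54/c^3 * r ^ ((5:ℝ)/2))
    · filter_upwards [self_mem_nhdsWithin] with r hr
      rcases eq_or_lt_of_le (mem_Ici.mp hr) with h | h
      · rw [← h, hG0]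
      · exact mul_nonneg (by positivity) (Eaux_pos b c r).le
    · filter_upwards [self_mem_nhdsWithin] with r hr
      rcases eq_or_lt_of_le (mem_Ici.mp hr) with h | h
      · rw [← h, hG0, Real.zero_rpow (by norm_num : ((5:ℝ)/2) ≠ 0)]
        simp
      · have h1 : G r ≤ 2 * r ^ (-(1:ℝ)/2) * (27 * r^3 / c^3 * Real.exp (-(b*r))) := by
          rw [hGdef]
          apply mul_le_mul_of_nonneg_left (Eaux_le hc h)
          positivity
        have h2 : 2 * r ^ (-(1:ℝ)/2) * (27 * r^3 / c^3 * Real.exp (-(b*r)))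
            ≤ 54/c^3 * r ^ ((5:ℝ)/2) := by
          have e4 : r ^ (-(1:ℝ)/2) * r^3 = r ^ ((5:ℝ)/2) := by
            rw [← Real.rpow_natCast r 3, ← Real.rpow_add h]; norm_num
          have he : Real.exp (-(b*r)) ≤ 1 := Real.exp_le_one_iff.mpr (by nlinarith)
          calc 2 * r ^ (-(1:ℝ)/2) * (27 * r^3 / c^3 * Real.exp (-(b*r)))
              ≤ 2 * r ^ (-(1:ℝ)/2) * (27 * r^3 / c^3 * 1) := by
                apply mul_le_mul_of_nonneg_left _ (by positivity)
                apply mul_le_mul_of_nonneg_left he (by positivity)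
            _ = 54/c^3 * (r ^ (-(1:ℝ)/2) * r^3) := by ring
            _ = 54/c^3 * r ^ ((5:ℝ)/2) := by rw [e4]
        linarith
    · have : Tendsto (fun r : ℝ => r ^ ((5:ℝ)/2)) (nhdsWithin 0 (Ici (0:ℝ))) (nhds 0) := by
        apply tendsto_nhdsWithin_of_tendsto_nhds
        have := (Real.continuousAt_rpow_const 0 ((5:ℝ)/2) (Or.inr (by norm_num))).tendsto
        simpa [Real.zero_rpow (by norm_num : ((5:ℝ)/2) ≠ 0)] using this
      simpa using this.const_mul (54/c^3)
  have htop : Tendsto G atTop (nhds 0) := by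
    apply squeeze_zero' (f := G) (g := fun r : ℝ => 2 * Real.exp (-(b*r)))
    · filter_upwards [eventually_ge_atTop (1:ℝ)] with r hr
      have h : (0:ℝ) < r := by linarith
      rw [hGdef]
      have := Eaux_pos b c r
      positivity
    · filter_upwards [eventually_ge_atTop (1:ℝ)] with r hr
      have hr0 : (0:ℝ) < r := by linarith
      have h1 : r ^ (-(1:ℝ)/2) ≤ 1 :=
        Real.rpow_le_one_of_one_le_of_nonpos hr (by norm_num)
      have h2 : Eaux b c r ≤ Real.exp (-(b*r)) := by
        rw [Eaux]
        apply Real.exp_le_exp.mpr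
        have : 0 ≤ c/r := by positivity
        linarith
      calc G r = 2 * r ^ (-(1:ℝ)/2) * Eaux b c r := rfl
        _ ≤ 2 * 1 * Real.exp (-(b*r)) := by
            apply mul_le_mul (by linarith [mul_le_mul_of_nonneg_left h1 (by norm_num : (0:ℝ) ≤ 2)])
              h2 (Eaux_pos b c r).le (by norm_num)
        _ = 2 * Real.exp (-(b*r)) := by ring
    · have h3 : Tendsto (fun r : ℝ => b * r) atTop atTop :=
        Tendsto.const_mul_atTop hb tendsto_id
      have := (Real.tendsto_exp_neg_atTop_nhds_zero.comp h3).const_mul (2:ℝ)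
      simpa using this
  have hint : IntegrableOn G' (Ioi (0:ℝ)) := by
    have i1 := (integrableOn_rpow_Eaux hb hc (s := -(5:ℝ)/2) (by norm_num)).const_mul (2*c)
    have i2 := integrableOn_rpow_Eaux hb hc (s := -(3:ℝ)/2) (by norm_num)
    have i3 := (integrableOn_rpow_Eaux hb hc (s := -(1:ℝ)/2) (by norm_num)).const_mul (2*b)
    apply ((i1.sub i2).sub i3).congr
    filter_upwards with r
    simp only [Pi.sub_apply, hG'def]
    ring
  have := integral_Ioi_of_hasDerivAt_of_tendsto hcont hderiv hint htop
  rw [this, hG0, sub_zero]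

lemma perTerm (hb : 0 < b) (hc : 0 < c) :
    ∫ r in Ioi (0:ℝ), 2 * ((2*(c/r) - 1) * (r ^ (-(3:ℝ)/2) * Eaux b c r))
      = 4 * Real.sqrt b * Real.sqrt π * Real.exp (-2 * Real.sqrt (b*c)) := by
  have hsb : 0 < Real.sqrt b := Real.sqrt_pos.mpr hb
  have hcong : ∀ r ∈ Ioi (0:ℝ), 2 * ((2*(c/r) - 1) * (r ^ (-(3:ℝ)/2) * Eaux b c r))
      = 2 * ((2*c*r ^ (-(5:ℝ)/2) - r ^ (-(3:ℝ)/2) - 2*b*r ^ (-(1:ℝ)/2)) * Eaux b c r)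
        + 4*b*(r ^ (-(1:ℝ)/2) * Eaux b c r) := by
    intro r hr
    have hr0 : (0:ℝ) < r := hr
    have e1 : r⁻¹ * r ^ (-(3:ℝ)/2) = r ^ (-(5:ℝ)/2) := by
      rw [← Real.rpow_neg_one r, ← Real.rpow_add hr0]; norm_num
    have : c/r * r ^ (-(3:ℝ)/2) = c * r ^ (-(5:ℝ)/2) := by
      rw [div_eq_mul_inv, mul_assoc, e1]
    nlinarith [this, Eaux_pos b c r]
  rw [setIntegral_congr_fun measurableSet_Ioi hcong]
  have i1 := ((integrableOn_rpow_Eaux hb hc (s := -(5:ℝ)/2) (by norm_num)).const_mul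
    (2*c)).sub (integrableOn_rpow_Eaux hb hc (s := -(3:ℝ)/2) (by norm_num)) |>.sub
    ((integrableOn_rpow_Eaux hb hc (s := -(1:ℝ)/2) (by norm_num)).const_mul (2*b))
  have i1' : IntegrableOn (fun r : ℝ =>
      2 * ((2*c*r ^ (-(5:ℝ)/2) - r ^ (-(3:ℝ)/2) - 2*b*r ^ (-(1:ℝ)/2)) * Eaux b c r))
      (Ioi (0:ℝ)) := by
    apply (i1.const_mul 2).congr
    filter_upwards with r
    simp only [Pi.sub_apply]
    ring
  have i2 := (integrableOn_rpow_Eaux hb hc (s := -(1:ℝ)/2) (by norm_num)).const_mul (4*b)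
  rw [integral_add i1' i2, MeasureTheory.integral_const_mul, MeasureTheory.integral_const_mul,
    lemFTC hb hc, valI hb hc]
  have hbb : Real.sqrt b ^ 2 = b := Real.sq_sqrt hb.le
  field_simp
  linear_combination (-4*Real.sqrt π * Real.exp (-(2*Real.sqrt (b*c))))*hbb



/-- The series expression `H(u) = 2 Σ_{n≥1} (2n²u² - 1) e^{-n²u²}` for the tail probability
`N_nr(Γ > u)` of the total height of the Brownian tree. -/
noncomputable def brownianTreeHeightTail (u : ℝ) : ℝ :=
  2 * ∑' n : ℕ, (2 * ((n : ℝ) + 1) ^ 2 * u ^ 2 - 1) *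
    Real.exp (-(((n : ℝ) + 1) ^ 2 * u ^ 2))

/-- Laplace-transform formula for the law of the height of the Brownian tree: for
`λ, z > 0`, `(1/(2√π)) ∫₀^∞ e^{-λr} r^{-3/2} H(z/√r) dr = √λ coth(z√λ) - √λ`. -/

theorem laplace_height (lam z : ℝ) (hlam : 0 < lam) (hz : 0 < z) :
    (1 / (2 * Real.sqrt Real.pi)) *
      ∫ r in Set.Ioi (0 : ℝ),
        Real.exp (-lam * r) * r ^ (-(3 : ℝ) / 2) * brownianTreeHeightTail (z / Real.sqrt r)
      = Real.sqrt lam *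
          (Real.cosh (z * Real.sqrt lam) / Real.sinh (z * Real.sqrt lam))
        - Real.sqrt lam := by
  have hslam : 0 < Real.sqrt lam := Real.sqrt_pos.mpr hlam
  have hy : 0 < z * Real.sqrt lam := mul_pos hz hslam
  set x := Real.exp (-(2 * (z * Real.sqrt lam))) with hxdef
  have hx0 : 0 < x := Real.exp_pos _
  have hx1 : x < 1 := by
    rw [hxdef, Real.exp_lt_one_iff]
    linarith
  set cn : ℕ → ℝ := fun n => ((n:ℝ)+1)^2 * z^2 with hcn
  have hcnpos : ∀ n, 0 < cn n := fun n => by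
    have : (0:ℝ) < (n:ℝ)+1 := by positivity
    positivity
  have hscn : ∀ n, Real.sqrt (lam * cn n) = ((n:ℝ)+1) * (z * Real.sqrt lam) := by
    intro n
    have h1 : lam * cn n = (((n:ℝ)+1) * (z * Real.sqrt lam))^2 := by
      simp only [hcn]
      nlinarith [Real.sq_sqrt hlam.le]
    rw [h1, Real.sqrt_sq (by positivity)]
  have hen : ∀ n, Real.exp (-2 * Real.sqrt (lam * cn n)) = x^(n+1) := by
    intro n
    rw [hscn n, hxdef, ← Real.exp_nat_mul]
    congr 1
    push_cast
    ring
  set F : ℕ → ℝ → ℝ := fun n r =>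
    2 * ((2*(cn n/r) - 1) * (r ^ (-(3:ℝ)/2) * Eaux lam (cn n) r)) with hF
  -- pointwise identity of integrands on Ioi 0
  have hinteq : ∀ r ∈ Ioi (0:ℝ),
      Real.exp (-lam * r) * r ^ (-(3:ℝ)/2) * brownianTreeHeightTail (z / Real.sqrt r)
        = ∑' n, F n r := by
    intro r hr
    have hr0 : (0:ℝ) < r := hr
    have hu2 : ∀ n : ℕ, ((n:ℝ)+1)^2 * (z / Real.sqrt r)^2 = cn n / r := by
      intro n
      simp only [hcn]
      rw [div_pow, Real.sq_sqrt hr0.le]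
      ring
    rw [brownianTreeHeightTail]
    rw [show Real.exp (-lam * r) * r ^ (-(3:ℝ)/2)
        * (2 * ∑' n : ℕ, (2 * ((n:ℝ)+1)^2 * (z / Real.sqrt r)^2 - 1) *
            Real.exp (-(((n:ℝ)+1)^2 * (z / Real.sqrt r)^2)))
      = ∑' n : ℕ, (Real.exp (-lam * r) * r ^ (-(3:ℝ)/2) * 2) *
          ((2 * ((n:ℝ)+1)^2 * (z / Real.sqrt r)^2 - 1) *
            Real.exp (-(((n:ℝ)+1)^2 * (z / Real.sqrt r)^2))) from by
      rw [tsum_mul_left]; ring]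
    apply tsum_congr
    intro n
    rw [mul_assoc 2 (((n:ℝ)+1)^2) ((z / Real.sqrt r)^2), hu2 n]
    have hEsplit : Real.exp (-lam * r) * Real.exp (-(cn n/r)) = Eaux lam (cn n) r := by
      rw [Eaux, ← Real.exp_add]
      congr 1
      ring
    simp only [hF]
    rw [← hEsplit]
    ring
  -- integrability of each term
  have hFint : ∀ n, Integrable (F n) (volume.restrict (Ioi (0:ℝ))) := by
    intro n
    have i1 := ((integrableOn_rpow_Eaux hlam (hcnpos n) (s := -(5:ℝ)/2)
      (by norm_num)).const_mul (4 * cn n)).sub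
      ((integrableOn_rpow_Eaux hlam (hcnpos n) (s := -(3:ℝ)/2) (by norm_num)).const_mul 2)
    apply i1.congr
    filter_upwards [ae_restrict_mem measurableSet_Ioi] with r hr
    have hr0 : (0:ℝ) < r := hr
    have e1 : cn n/r * r ^ (-(3:ℝ)/2) = cn n * r ^ (-(5:ℝ)/2) := by
      rw [div_eq_mul_inv, mul_assoc, ← Real.rpow_neg_one r, ← Real.rpow_add hr0]
      norm_num
    simp only [Pi.sub_apply, hF]
    nlinarith [e1, Eaux_pos lam (cn n) r]
  -- value of each term integral
  have hFval : ∀ n, (∫ r in Ioi (0:ℝ), F n r)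
      = 4 * Real.sqrt lam * Real.sqrt π * x^(n+1) := by
    intro n
    simp only [hF]
    rw [perTerm hlam (hcnpos n), hen n]
  -- bound on the norms
  have hJn : ∀ n, (∫ r in Ioi (0:ℝ), 4 * (r ^ (-(3:ℝ)/2) * Eaux lam (cn n) r))
      = 4 * (Real.sqrt π / Real.sqrt (cn n)) * x^(n+1) := by
    intro n
    rw [MeasureTheory.integral_const_mul, valJ hlam (hcnpos n), hen n]
    ring
  have hnorm : ∀ n, (∫ r in Ioi (0:ℝ), ‖F n r‖)
      ≤ (4 * Real.sqrt π * (Real.sqrt lam + 1/z)) * x^(n+1) := by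
    intro n
    have hscnn : Real.sqrt (cn n) = ((n:ℝ)+1) * z := by
      simp only [hcn]
      rw [show ((n:ℝ)+1)^2 * z^2 = (((n:ℝ)+1)*z)^2 by ring,
        Real.sqrt_sq (by positivity)]
    have hJint : Integrable (fun r : ℝ => 4 * (r ^ (-(3:ℝ)/2) * Eaux lam (cn n) r))
        (volume.restrict (Ioi (0:ℝ))) :=
      (integrableOn_rpow_Eaux hlam (hcnpos n) (by norm_num)).const_mul 4
    have hb1 : (∫ r in Ioi (0:ℝ), ‖F n r‖)
        ≤ ∫ r in Ioi (0:ℝ), (F n r + 4 * (r ^ (-(3:ℝ)/2) * Eaux lam (cn n) r)) := by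
      apply integral_mono_ae (hFint n).norm ((hFint n).add hJint)
      filter_upwards [ae_restrict_mem measurableSet_Ioi] with r hr
      have hr0 : (0:ℝ) < r := hr
      have hrp : 0 < r ^ (-(3:ℝ)/2) := Real.rpow_pos_of_pos hr0 _
      have hE := Eaux_pos lam (cn n) r
      have hcr : 0 < cn n / r := div_pos (hcnpos n) hr0
      simp only [Pi.add_apply, hF, Real.norm_eq_abs]
      rw [abs_mul, abs_mul, abs_of_pos (mul_pos hrp hE), abs_of_pos (by norm_num : (0:ℝ) < 2)]
      have : |2*(cn n/r) - 1| ≤ 2*(cn n/r) + 1 := by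
        rw [abs_le]; constructor <;> linarith
      nlinarith [mul_pos hrp hE]
    have hb2 : (∫ r in Ioi (0:ℝ), (F n r + 4 * (r ^ (-(3:ℝ)/2) * Eaux lam (cn n) r)))
        = 4 * Real.sqrt lam * Real.sqrt π * x^(n+1)
          + 4 * (Real.sqrt π / Real.sqrt (cn n)) * x^(n+1) := by
      rw [integral_add (hFint n) hJint, hFval n, hJn n]
    have hle : Real.sqrt π / Real.sqrt (cn n) ≤ Real.sqrt π * (1/z) := by
      have h1 : (1:ℝ) ≤ (n:ℝ)+1 := by have := Nat.cast_nonneg (α:=ℝ) n; linarith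
      rw [hscnn]
      rw [div_le_iff₀ (show (0:ℝ) < ((n:ℝ)+1)*z by positivity)]
      have e0 : Real.sqrt π * (1/z) * (((n:ℝ)+1)*z) = Real.sqrt π * ((n:ℝ)+1) := by
        field_simp
      rw [e0]
      nlinarith [Real.sqrt_nonneg π]
    calc (∫ r in Ioi (0:ℝ), ‖F n r‖)
        ≤ 4 * Real.sqrt lam * Real.sqrt π * x^(n+1)
          + 4 * (Real.sqrt π / Real.sqrt (cn n)) * x^(n+1) := by rw [← hb2]; exact hb1
      _ ≤ (4 * Real.sqrt π * (Real.sqrt lam + 1/z)) * x^(n+1) := by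
          have := pow_pos hx0 (n+1)
          nlinarith [hle, pow_pos hx0 (n+1)]
  have hsum : Summable (fun n => ∫ r in Ioi (0:ℝ), ‖F n r‖) := by
    apply Summable.of_nonneg_of_le
      (fun n => integral_nonneg fun r => norm_nonneg _) hnorm
    have hgeo : Summable (fun n : ℕ => ((4 * Real.sqrt π * (Real.sqrt lam + 1/z)) * x) * x^n) :=
      (summable_geometric_of_lt_one hx0.le hx1).mul_left _
    apply hgeo.congr
    intro n
    rw [pow_succ]
    ring
  have hswap := MeasureTheory.integral_tsum_of_summable_integral_norm hFint hsum
  rw [setIntegral_congr_fun measurableSet_Ioi hinteq, ← hswap]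
  have htsum : (∑' n : ℕ, ∫ r in Ioi (0:ℝ), F n r)
      = 4 * Real.sqrt lam * Real.sqrt π * x * (1-x)⁻¹ := by
    rw [tsum_congr hFval]
    have : ∀ n : ℕ, 4 * Real.sqrt lam * Real.sqrt π * x^(n+1)
        = (4 * Real.sqrt lam * Real.sqrt π * x) * x^n := by
      intro n; rw [pow_succ]; ring
    rw [tsum_congr this, tsum_mul_left, tsum_geometric_of_lt_one hx0.le hx1]
  rw [htsum]
  -- final algebra with cosh/sinh
  have hπ : 0 < Real.sqrt π := Real.sqrt_pos.mpr Real.pi_pos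
  set t := Real.exp (z * Real.sqrt lam) with htdef
  have ht0 : 0 < t := Real.exp_pos _
  have ht1 : 1 < t := by
    calc (1:ℝ) = Real.exp 0 := Real.exp_zero.symm
    _ < t := Real.exp_lt_exp.mpr hy
  have hxt : x = t⁻¹ * t⁻¹ := by
    rw [hxdef, show -(2 * (z * Real.sqrt lam))
      = (-(z * Real.sqrt lam)) + (-(z * Real.sqrt lam)) by ring,
      Real.exp_add, Real.exp_neg, htdef]
  have h1x : (0:ℝ) < 1 - x := by linarith
  have hsinh : Real.sinh (z * Real.sqrt lam) = (t - t⁻¹)/2 := by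
    rw [Real.sinh_eq, Real.exp_neg, htdef]
  have hcosh : Real.cosh (z * Real.sqrt lam) = (t + t⁻¹)/2 := by
    rw [Real.cosh_eq, Real.exp_neg, htdef]
  have htt : 0 < t - t⁻¹ := by
    have : t⁻¹ < 1 := by
      rw [inv_lt_one_iff₀]
      right; exact ht1
    linarith
  rw [hcosh, hsinh, hxt]
  have htm : (0:ℝ) < t^2 - 1 := by nlinarith
  have e1 : (1:ℝ) - t⁻¹*t⁻¹ = (t^2 - 1)/t^2 := by field_simp
  have e2 : t - t⁻¹ = (t^2 - 1)/t := by field_simp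
  rw [e1, e2]
  field_simp
  ring
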